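/- Let n ≥ 4. Then the share-a-row graph on Latin squares of order n is connected: for any two Latin squares L and M of order n, there exists a finite sequence L = L₀, L₁, …, L_m = M of Latin squares of order n such that each consecutive pair shares a row, i.e., for every t < m there exist indices a, b : Fin n with L_t a = L_{t+1} b (equality of functions Fin n → Fin n). -/

import Mathlib

/-- `L` is a Latin square of order `n`: every row and every column is a
bijection of `Fin n`. -/
def IsLatinSquare {n : ℕ} (L : Fin n → Fin n → Fin n) : Prop :=
  (∀ i : Fin n, Function.Bijective (L i)) ∧
    ∀ j : Fin n, Function.Bijective (fun i : Fin n => L i j)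

open Function Finset

/-- One step of Latin rectangle extension: a `k × n` Latin rectangle with
`k < n` admits a new row. -/
lemma latin_extend_step {n k : ℕ} (hk : k < n) (R : Fin k → Fin n → Fin n)
    (hrow : ∀ i, Function.Bijective (R i))
    (hcol : ∀ j, Function.Injective fun i => R i j) :
    ∃ ρ : Fin n → Fin n, Function.Bijective ρ ∧ ∀ j i, R i j ≠ ρ j := by
  classical
  set t : Fin n → Finset (Fin n) :=
    fun j => univ \ (univ.image fun i => R i j) with ht
  have hcardt : ∀ j, (t j).card = n - k := by
    intro j
    rw [ht]
    rw [card_sdiff_of_subset (subset_univ _), card_image_of_injective _ (hcol j), card_univ, card_univ,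
      Fintype.card_fin, Fintype.card_fin]
  have hmem : ∀ v j, v ∉ t j ↔ ∃ i, R i j = v := by
    intro v j; simp [ht]
  have hdeg : ∀ v : Fin n, (univ.filter fun j => v ∈ t j).card = n - k := by
    intro v
    have hneg : (univ.filter fun j => v ∉ t j).card = k := by
      have himg : (univ.filter fun j => v ∉ t j) =
          univ.image fun i : Fin k => (Equiv.ofBijective (R i) (hrow i)).symm v := by
        ext j
        rw [mem_filter, mem_image]
        constructor
        · rintro ⟨-, hj⟩
          rw [hmem] at hj
          obtain ⟨i, hi⟩ := hj
          refine ⟨i, mem_univ i, ?_⟩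
          apply (hrow i).injective
          show R i _ = R i j
          exact ((Equiv.ofBijective (R i) (hrow i)).apply_symm_apply v).trans hi.symm
        · rintro ⟨i, -, rfl⟩
          exact ⟨mem_univ _, (hmem v _).mpr
            ⟨i, (Equiv.ofBijective (R i) (hrow i)).apply_symm_apply v⟩⟩
      have hinj : Function.Injective
          fun i : Fin k => (Equiv.ofBijective (R i) (hrow i)).symm v := by
        intro a b hab
        have hab' : (Equiv.ofBijective (R a) (hrow a)).symm v =
            (Equiv.ofBijective (R b) (hrow b)).symm v := hab
        have ha : R a ((Equiv.ofBijective (R a) (hrow a)).symm v) = v :=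
          (Equiv.ofBijective (R a) (hrow a)).apply_symm_apply v
        have hb : R b ((Equiv.ofBijective (R b) (hrow b)).symm v) = v :=
          (Equiv.ofBijective (R b) (hrow b)).apply_symm_apply v
        apply hcol ((Equiv.ofBijective (R a) (hrow a)).symm v)
        show R a _ = R b _
        rw [ha, hab', hb]
      rw [himg, card_image_of_injective _ hinj, card_univ, Fintype.card_fin]
    have := Finset.card_filter_add_card_filter_not
      (s := (univ : Finset (Fin n))) (p := fun j => v ∈ t j)
    rw [card_univ, Fintype.card_fin] at this
    omega
  have hall : ∀ S : Finset (Fin n), S.card ≤ (S.biUnion t).card := by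
    intro S
    have hmul := Finset.card_mul_le_card_mul (fun j v => v ∈ t j)
      (s := S) (t := S.biUnion t) (m := n - k) (n := n - k)
      (fun j hj => by
        have hsub : t j ⊆ (S.biUnion t).filter (fun v => v ∈ t j) := by
          intro v hv
          exact mem_filter.mpr ⟨mem_biUnion.mpr ⟨j, hj, hv⟩, hv⟩
        calc n - k = (t j).card := (hcardt j).symm
          _ ≤ _ := card_le_card hsub)
      (fun v _ => by
        have hsub : S.filter (fun j => v ∈ t j) ⊆ univ.filter (fun j => v ∈ t j) :=
          filter_subset_filter _ (subset_univ S)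
        calc (Finset.bipartiteBelow (fun j v => v ∈ t j) S v).card
            = (S.filter (fun j => v ∈ t j)).card := rfl
          _ ≤ (univ.filter (fun j => v ∈ t j)).card := card_le_card hsub
          _ = n - k := hdeg v)
    exact Nat.le_of_mul_le_mul_right hmul (by omega)
  obtain ⟨f, hfinj, hf⟩ := (Finset.all_card_le_biUnion_card_iff_exists_injective t).mp hall
  refine ⟨f, Finite.injective_iff_bijective.mp hfinj, fun j i => ?_⟩
  have := hf j
  rw [ht] at this
  rw [mem_sdiff] at this
  intro h
  exact this.2 (mem_image.mpr ⟨i, mem_univ i, h⟩)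

/-- Any Latin rectangle extends to a full Latin square containing its rows. -/
lemma latin_complete (n : ℕ) : ∀ d k (R : Fin k → Fin n → Fin n), k + d = n →
    (∀ i, Function.Bijective (R i)) → (∀ j, Function.Injective fun i => R i j) →
    ∃ L : Fin n → Fin n → Fin n, IsLatinSquare L ∧ ∀ i : Fin k, ∃ a, L a = R i := by
  intro d
  induction d with
  | zero =>
    intro k R hk hrow hcol
    have hk' : n = k := by omega
    refine ⟨fun a => R (Fin.cast hk' a), ⟨fun a => hrow _, fun j => ?_⟩, fun i => ?_⟩
    · rw [← Finite.injective_iff_bijective]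
      intro a b hab
      have h2 : Fin.cast hk' a = Fin.cast hk' b := hcol j hab
      have h3 := congrArg Fin.val h2
      simp only [Fin.coe_cast] at h3
      exact Fin.ext h3
    · refine ⟨Fin.cast hk'.symm i, ?_⟩
      show R (Fin.cast hk' (Fin.cast hk'.symm i)) = R i
      have h4 : Fin.cast hk' (Fin.cast hk'.symm i) = i := by
        apply Fin.ext; simp
      rw [h4]
  | succ d ih =>
    intro k R hk hrow hcol
    obtain ⟨ρ, hρbij, hρ⟩ := latin_extend_step (show k < n by omega) R hrow hcol
    set R' : Fin (k + 1) → Fin n → Fin n := Fin.snoc R ρ with hR'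
    have hrow' : ∀ i, Function.Bijective (R' i) := by
      intro i
      refine Fin.lastCases ?_ ?_ i
      · simpa [hR'] using hρbij
      · intro i0; simpa [hR'] using hrow i0
    have key : ∀ (i0 : Fin k) j, R' (Fin.castSucc i0) j ≠ R' (Fin.last k) j := by
      intro i0 j
      simpa [hR'] using hρ j i0
    have hcol' : ∀ j, Function.Injective fun i => R' i j := by
      intro j a b hab
      simp only at hab
      induction a using Fin.lastCases with
      | last =>
        induction b using Fin.lastCases with
        | last => rfl
        | cast b0 => exact absurd hab.symm (key b0 j)
      | cast a0 =>
        induction b using Fin.lastCases with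
        | last => exact absurd hab (key a0 j)
        | cast b0 =>
          have hab' : R a0 j = R b0 j := by simpa [hR'] using hab
          exact congrArg Fin.castSucc (hcol j hab')
    obtain ⟨L, hLat, hrows⟩ := ih (k + 1) R' (by omega) hrow' hcol'
    refine ⟨L, hLat, fun i => ?_⟩
    obtain ⟨a, ha⟩ := hrows i.castSucc
    exact ⟨a, by simpa [hR'] using ha⟩

/-- Two everywhere-disagreeing permutations are rows of a common Latin square. -/
lemma exists_square_two_rows {n : ℕ} (hn : 2 ≤ n) (σ τ : Fin n → Fin n)
    (hσ : Function.Bijective σ) (hτ : Function.Bijective τ)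
    (hd : ∀ j, σ j ≠ τ j) :
    ∃ N : Fin n → Fin n → Fin n, IsLatinSquare N ∧ (∃ a, N a = σ) ∧ ∃ b, N b = τ := by
  set R : Fin 2 → Fin n → Fin n := fun i => if i = 0 then σ else τ with hR
  have hrow : ∀ i, Function.Bijective (R i) := by
    intro i
    fin_cases i
    · simpa [hR] using hσ
    · simpa [hR] using hτ
  have hcol : ∀ j, Function.Injective fun i => R i j := by
    intro j a b hab
    fin_cases a <;> fin_cases b <;> simp_all [hR]
    · exact hd j hab.symm
  obtain ⟨N, hLat, hrows⟩ := latin_complete n (n - 2) 2 R (by omega) hrow hcol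
  obtain ⟨a, ha⟩ := hrows 0
  obtain ⟨b, hb⟩ := hrows 1
  refine ⟨N, hLat, ⟨a, ?_⟩, ⟨b, ?_⟩⟩
  · rw [ha]; simp [hR]
  · rw [hb]; simp [hR]

/-- For `n ≥ 4` there is a permutation disagreeing everywhere with two
given permutations. -/
lemma exists_middle {n : ℕ} (hn : 4 ≤ n) (σ τ : Fin n → Fin n)
    (hσ : Function.Bijective σ) (hτ : Function.Bijective τ) :
    ∃ ρ : Fin n → Fin n, Function.Bijective ρ ∧ (∀ j, σ j ≠ ρ j) ∧ ∀ j, τ j ≠ ρ j := by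
  classical
  haveI : NeZero n := ⟨by omega⟩
  set t : Fin n → Finset (Fin n) := fun j => univ \ {σ j, τ j} with ht
  have hcardt : ∀ j, n - 2 ≤ (t j).card := by
    intro j
    show n - 2 ≤ (univ \ ({σ j, τ j} : Finset (Fin n))).card
    have h1 : ({σ j, τ j} : Finset (Fin n)).card ≤ 2 :=
      (card_insert_le _ _).trans (by simp)
    have := card_sdiff_of_subset (subset_univ ({σ j, τ j} : Finset (Fin n)))
    rw [card_univ, Fintype.card_fin] at this
    omega
  have hall : ∀ S : Finset (Fin n), S.card ≤ (S.biUnion t).card := by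
    intro S
    by_cases hS : S.card ≤ 2
    · rcases S.eq_empty_or_nonempty with rfl | ⟨j0, hj0⟩
      · simp
    
      · have hsub : t j0 ⊆ S.biUnion t := subset_biUnion_of_mem t hj0
        calc S.card ≤ 2 := hS
          _ ≤ n - 2 := by omega
          _ ≤ (t j0).card := hcardt j0
          _ ≤ (S.biUnion t).card := card_le_card hsub
    · push_neg at hS
      have huniv : S.biUnion t = univ := by
        ext v
        simp only [mem_biUnion, mem_univ, iff_true]
        by_contra h
        push_neg at h
        have hsub : S ⊆ {(Equiv.ofBijective σ hσ).symm v, (Equiv.ofBijective τ hτ).symm v} := by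
          intro j hj
          have hv := h j hj
          rw [ht] at hv
          simp only [mem_sdiff, mem_univ, true_and, not_not, mem_insert,
            mem_singleton] at hv
          rcases hv with hv | hv
          · have : j = (Equiv.ofBijective σ hσ).symm v := by
              apply hσ.injective
              rw [← hv]
              exact ((Equiv.ofBijective σ hσ).apply_symm_apply v).symm
            simp [this]
          · have : j = (Equiv.ofBijective τ hτ).symm v := by
              apply hτ.injective
              rw [← hv]
              exact ((Equiv.ofBijective τ hτ).apply_symm_apply v).symm
            simp [this]
        have := card_le_card hsub
        have h2 : ({(Equiv.ofBijective σ hσ).symm v,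
            (Equiv.ofBijective τ hτ).symm v} : Finset (Fin n)).card ≤ 2 :=
          (card_insert_le _ _).trans (by simp)
        omega
      rw [huniv, card_univ, Fintype.card_fin]
      exact (card_le_univ S).trans (by simp)
  obtain ⟨f, hfinj, hf⟩ := (Finset.all_card_le_biUnion_card_iff_exists_injective t).mp hall
  refine ⟨f, Finite.injective_iff_bijective.mp hfinj, fun j => ?_, fun j => ?_⟩ <;>
  · have := hf j
    rw [ht] at this
    simp only [mem_sdiff, mem_univ, true_and, mem_insert, mem_singleton, not_or] at this
    tauto

/-- The cyclic square built from a permutation is Latin. -/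
lemma cyclic_latin {n : ℕ} [NeZero n] (σ : Fin n → Fin n) (hσ : Function.Bijective σ) :
    IsLatinSquare (fun i j : Fin n => σ (i + j)) :=
  ⟨fun i => hσ.comp (Equiv.addLeft i).bijective,
   fun j => hσ.comp (Equiv.addRight j).bijective⟩

/-- For `n ≥ 4`, the share-a-row graph on Latin squares of order `n` is
connected: any two Latin squares are joined by a finite chain of Latin
squares in which consecutive members share a row. -/
theorem share_a_row_graph_connected (n : ℕ) (hn : 4 ≤ n)
    (L M : Fin n → Fin n → Fin n) (hL : IsLatinSquare L) (hM : IsLatinSquare M) :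
    ∃ (m : ℕ) (seq : ℕ → Fin n → Fin n → Fin n),
      seq 0 = L ∧ seq m = M ∧
      (∀ t : ℕ, t ≤ m → IsLatinSquare (seq t)) ∧
      (∀ t : ℕ, t < m → ∃ a b : Fin n, seq t a = seq (t + 1) b) := by
  haveI : NeZero n := ⟨by omega⟩
  set σ : Fin n → Fin n := L 0 with hσdef
  set τ : Fin n → Fin n := M 0 with hτdef
  have hσ : Function.Bijective σ := hL.1 0
  have hτ : Function.Bijective τ := hM.1 0
  obtain ⟨ρ, hρ, hσρ, hτρ⟩ := exists_middle hn σ τ hσ hτ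
  obtain ⟨N1, hN1, ⟨a1, ha1⟩, ⟨b1, hb1⟩⟩ :=
    exists_square_two_rows (by omega) σ ρ hσ hρ hσρ
  obtain ⟨N2, hN2, ⟨a2, ha2⟩, ⟨b2, hb2⟩⟩ :=
    exists_square_two_rows (by omega) ρ τ hρ hτ (fun j => (hτρ j).symm)
  set Cσ : Fin n → Fin n → Fin n := fun i j => σ (i + j) with hCσ
  set Cρ : Fin n → Fin n → Fin n := fun i j => ρ (i + j) with hCρ
  set Cτ : Fin n → Fin n → Fin n := fun i j => τ (i + j) with hCτ
  refine ⟨6, fun t => match t with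
    | 0 => L | 1 => Cσ | 2 => N1 | 3 => Cρ | 4 => N2 | 5 => Cτ | _ => M,
    rfl, rfl, ?_, ?_⟩
  · intro t ht
    interval_cases t
    · exact hL
    · exact cyclic_latin σ hσ
    · exact hN1
    · exact cyclic_latin ρ hρ
    · exact hN2
    · exact cyclic_latin τ hτ
    · exact hM
  · intro t ht
    interval_cases t
    · exact ⟨0, 0, by funext j; show L 0 j = σ (0 + j); rw [zero_add]⟩
    · exact ⟨0, a1, by funext j; show σ (0 + j) = N1 a1 j; rw [ha1, zero_add]⟩
    · exact ⟨b1, 0, by funext j; show N1 b1 j = ρ (0 + j); rw [hb1, zero_add]⟩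
    · exact ⟨0, a2, by funext j; show ρ (0 + j) = N2 a2 j; rw [ha2, zero_add]⟩
    · exact ⟨b2, 0, by funext j; show N2 b2 j = τ (0 + j); rw [hb2, zero_add]⟩
    · exact ⟨0, 0, by funext j; show τ (0 + j) = M 0 j; rw [zero_add]⟩
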